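/- arXiv:2206.05118 — 2 statements merged into one kernel-verified Lean document; each statement's English description precedes it below -/
import Mathlib

section
/- Let f be a set of natural numbers, d > 0 a real constant, c > 0, and suppose there is a constant C₀ > 0 such that |π_f(x) − d·∫_2^x dt/ln t| ≤ C₀·x·exp(−c·√(ln x)) for all x ≥ 2. Then there is a constant C > 0 such that for all x ≥ 2: |∑_{p prime, p ≤ x, p ∈ f} ln p − d·x| ≤ C·x·ln x·exp(−c·√(ln x)). -/
open Filter

/-- `primeCountIn f t` is the number of primes `p ≤ t` with `p ∈ f`. -/
noncomputable def primeCountIn (f : Set ℕ) (t : ℝ) : ℕ :=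
  {p : ℕ | p.Prime ∧ p ∈ f ∧ (p : ℝ) ≤ t}.ncard

open scoped Classical in
/-- `primeSumIn f g x` is the sum of `g p` over primes `p ≤ x` with `p ∈ f`. -/
noncomputable def primeSumIn (f : Set ℕ) (g : ℝ → ℝ) (x : ℝ) : ℝ :=
  ∑ p ∈ (Finset.range (⌊x⌋₊ + 1)).filter (fun p => p.Prime ∧ p ∈ f), g p

open scoped Classical

noncomputable def ind (f : Set ℕ) (k : ℕ) : ℝ := if k.Prime ∧ k ∈ f then 1 else 0

lemma count_eq_card (f : Set ℕ) (t : ℝ) :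
    primeCountIn f t = ((Finset.Icc 0 ⌊t⌋₊).filter fun p => p.Prime ∧ p ∈ f).card := by
  rcases le_or_gt 0 t with ht | ht
  · have hset : {p : ℕ | p.Prime ∧ p ∈ f ∧ (p : ℝ) ≤ t}
        = ↑((Finset.Icc 0 ⌊t⌋₊).filter fun p => p.Prime ∧ p ∈ f) := by
      ext p
      simp only [Set.mem_setOf_eq, Finset.coe_filter, Finset.mem_Icc, Nat.le_floor_iff ht,
        Set.mem_setOf_eq]
      constructor
      · rintro ⟨h1, h2, h3⟩; exact ⟨⟨Nat.zero_le _, h3⟩, h1, h2⟩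
      · rintro ⟨⟨_, h3⟩, h1, h2⟩; exact ⟨h1, h2, h3⟩
    rw [primeCountIn, hset, Set.ncard_coe_finset]
  · have h1 : {p : ℕ | p.Prime ∧ p ∈ f ∧ (p : ℝ) ≤ t} = ∅ := by
      ext p
      simp only [Set.mem_setOf_eq, Set.mem_empty_iff_false, iff_false, not_and]
      intro hp _
      have : (0:ℝ) ≤ (p : ℝ) := Nat.cast_nonneg p
      linarith
    have h2 : ⌊t⌋₊ = 0 := Nat.floor_eq_zero.mpr (by linarith [ht.trans_le (zero_le_one)])
    rw [primeCountIn, h1, Set.ncard_empty, h2]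
    rw [show Finset.Icc 0 0 = {0} by rfl]
    simp [Finset.filter_singleton, Nat.not_prime_zero]

lemma sum_ind_eq_count (f : Set ℕ) (t : ℝ) :
    ∑ k ∈ Finset.Icc 0 ⌊t⌋₊, ind f k = (primeCountIn f t : ℝ) := by
  rw [count_eq_card]
  simp [ind, Finset.sum_ite, Finset.sum_const]

lemma count_measurable (f : Set ℕ) :
    Measurable fun t : ℝ => (primeCountIn f t : ℝ) := by
  have : (fun t : ℝ => (primeCountIn f t : ℝ)) =
      (fun n : ℕ => (((Finset.Icc 0 n).filter fun p => p.Prime ∧ p ∈ f).card : ℝ)) ∘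
        (Nat.floor : ℝ → ℕ) := by
    ext t; simp [count_eq_card, Function.comp]
  rw [this]
  exact (measurable_from_nat).comp Nat.measurable_floor

lemma primeSumIn_eq (f : Set ℕ) (x : ℝ) :
    primeSumIn f Real.log x = ∑ k ∈ Finset.Ioc 1 ⌊x⌋₊, Real.log k * ind f k := by
  rw [primeSumIn, Finset.sum_filter]
  have h1 : Finset.range (⌊x⌋₊ + 1) = Finset.Icc 0 ⌊x⌋₊ := by
    rw [← Finset.Ico_add_one_right_eq_Icc, Finset.range_eq_Ico]
  rw [h1]
  rw [← Finset.sum_subset (Finset.Ioc_subset_Icc_self.trans (Finset.Icc_subset_Icc_left (Nat.zero_le 1)))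
    (fun k hk2 hk => ?_)]
  · refine Finset.sum_congr rfl fun k _ => ?_
    simp only [ind]; split <;> simp
  · simp only [Finset.mem_Icc] at hk2
    simp only [Finset.mem_Ioc, not_and_or, not_lt, not_le] at hk
    rcases hk with h | h
    · interval_cases k <;> simp [Nat.not_prime_zero, Nat.not_prime_one]
    · omega

lemma lower_bd (c : ℝ) (x : ℝ) (hx : 2 ≤ x) :
    Real.log 2 * Real.exp (-(c^2)/4) ≤ x * Real.log x * Real.exp (-c * Real.sqrt (Real.log x)) := by
  have hlx : Real.log 2 ≤ Real.log x := Real.log_le_log (by norm_num) hx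
  have hl2 : (0:ℝ) < Real.log 2 := Real.log_pos (by norm_num)
  have hu : 0 ≤ Real.log x := by linarith
  have hs : Real.sqrt (Real.log x) ^ 2 = Real.log x := Real.sq_sqrt hu
  have key : Real.exp (-(c^2)/4) ≤ x * Real.exp (-c * Real.sqrt (Real.log x)) := by
    have hxpos : (0:ℝ) < x := by linarith
    calc Real.exp (-(c^2)/4) ≤ Real.exp (Real.log x - c * Real.sqrt (Real.log x)) := by
          apply Real.exp_le_exp.mpr
          nlinarith [sq_nonneg (Real.sqrt (Real.log x) - c/2)]
      _ = x * Real.exp (-c * Real.sqrt (Real.log x)) := by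
          rw [sub_eq_add_neg, Real.exp_add, Real.exp_log hxpos]; ring_nf
  calc Real.log 2 * Real.exp (-(c^2)/4) ≤ Real.log x * (x * Real.exp (-c * Real.sqrt (Real.log x))) := by
        exact mul_le_mul hlx key (Real.exp_pos _).le hu
    _ = x * Real.log x * Real.exp (-c * Real.sqrt (Real.log x)) := by ring

lemma contOn_ec (c : ℝ) : ContinuousOn (fun t => Real.exp (-c * Real.sqrt (Real.log t))) (Set.Ici (1:ℝ)) := by
  apply Real.continuous_exp.comp_continuousOn
  apply ContinuousOn.mul continuousOn_const
  exact Real.continuous_sqrt.comp_continuousOn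
    (Real.continuousOn_log.mono (fun t ht => by simp only [Set.mem_compl_iff, Set.mem_singleton_iff]; intro h; simp [Set.mem_Ici] at ht; linarith))

lemma hasDerivAt_H (c t : ℝ) (ht : 1 < t) :
    HasDerivAt (fun s => 2 * s * Real.exp (-c * Real.sqrt (Real.log s)))
      (2 * Real.exp (-c * Real.sqrt (Real.log t)) * (1 - c / (2 * Real.sqrt (Real.log t)))) t := by
  have ht0 : (0:ℝ) < t := by linarith
  have hlt : 0 < Real.log t := Real.log_pos ht
  have hst : 0 < Real.sqrt (Real.log t) := Real.sqrt_pos.mpr hlt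
  have h1 : HasDerivAt Real.log t⁻¹ t := Real.hasDerivAt_log (ne_of_gt ht0)
  have h2 : HasDerivAt Real.sqrt (1 / (2 * Real.sqrt (Real.log t))) (Real.log t) :=
    Real.hasDerivAt_sqrt (ne_of_gt hlt)
  have h3 : HasDerivAt (fun s => Real.sqrt (Real.log s)) (1 / (2 * Real.sqrt (Real.log t)) * t⁻¹) t :=
    h2.comp t h1
  have h4 : HasDerivAt (fun s => -c * Real.sqrt (Real.log s)) (-c * (1 / (2 * Real.sqrt (Real.log t)) * t⁻¹)) t :=
    h3.const_mul (-c)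
  have h5 := h4.exp
  have h6 : HasDerivAt (fun s : ℝ => 2 * s) 2 t := by simpa using (hasDerivAt_id t).const_mul (2:ℝ)
  have h7 := h6.mul h5
  refine h7.congr_deriv ?_
  field_simp
  ring

lemma exp_int_bound (c : ℝ) (hc : 0 < c) (x : ℝ) (hx : 2 ≤ x) :
    ∫ t in (2:ℝ)..x, Real.exp (-c * Real.sqrt (Real.log t)) ≤
      max 2 (Real.exp (c^2)) + 2 * x * Real.exp (-c * Real.sqrt (Real.log x)) := by
  set T : ℝ := max 2 (Real.exp (c^2)) with hT
  have hT2 : (2:ℝ) ≤ T := le_max_left _ _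
  have hec_int : ∀ a b : ℝ, 1 ≤ a → a ≤ b → IntervalIntegrable (fun t => Real.exp (-c * Real.sqrt (Real.log t))) MeasureTheory.volume a b := by
    intro a b ha hab
    exact ((contOn_ec c).mono (by rw [Set.uIcc_of_le hab]; exact fun t htt => le_trans ha htt.1)).intervalIntegrable
  have hec_le_one : ∀ t : ℝ, 1 ≤ t → Real.exp (-c * Real.sqrt (Real.log t)) ≤ 1 := by
    intro t htt
    rw [show (1:ℝ) = Real.exp 0 by simp]
    apply Real.exp_le_exp.mpr
    have : 0 ≤ Real.sqrt (Real.log t) := Real.sqrt_nonneg _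
    nlinarith
  have hsimple : ∀ a b : ℝ, 1 ≤ a → a ≤ b → ∫ t in a..b, Real.exp (-c * Real.sqrt (Real.log t)) ≤ b - a := by
    intro a b ha hab
    calc ∫ t in a..b, Real.exp (-c * Real.sqrt (Real.log t)) ≤ ∫ _ in a..b, (1:ℝ) := by
          apply intervalIntegral.integral_mono_on hab (hec_int a b ha hab) intervalIntegrable_const
          exact fun t htt => hec_le_one t (le_trans ha htt.1)
      _ = b - a := by simp
  rcases le_or_gt x T with hxT | hTx
  · have h1 := hsimple 2 x (by norm_num) hx
    have h2 : (0:ℝ) ≤ 2 * x * Real.exp (-c * Real.sqrt (Real.log x)) := by positivity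
    linarith
  · have hsplit : ∫ t in (2:ℝ)..x, Real.exp (-c * Real.sqrt (Real.log t)) =
        (∫ t in (2:ℝ)..T, Real.exp (-c * Real.sqrt (Real.log t))) +
        ∫ t in T..x, Real.exp (-c * Real.sqrt (Real.log t)) := by
      rw [intervalIntegral.integral_add_adjacent_intervals (hec_int 2 T (by norm_num) hT2)
        (hec_int T x (by linarith) hTx.le)]
    have hderiv : ∀ t ∈ Set.uIcc T x, HasDerivAt (fun s => 2 * s * Real.exp (-c * Real.sqrt (Real.log s)))
        (2 * Real.exp (-c * Real.sqrt (Real.log t)) * (1 - c / (2 * Real.sqrt (Real.log t)))) t := by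
      intro t htt
      rw [Set.uIcc_of_le hTx.le] at htt
      exact hasDerivAt_H c t (by linarith [htt.1])
    have hlogT : ∀ t : ℝ, T ≤ t → c ≤ Real.sqrt (Real.log t) := by
      intro t htt
      have h1 : Real.exp (c^2) ≤ t := le_trans (le_max_right _ _) htt
      have h2 : c^2 ≤ Real.log t := by
        rw [← Real.log_exp (c^2)]
        exact Real.log_le_log (Real.exp_pos _) h1
      calc c = Real.sqrt (c^2) := by rw [Real.sqrt_sq hc.le]
        _ ≤ Real.sqrt (Real.log t) := Real.sqrt_le_sqrt h2
    have hcontD : ContinuousOn (fun t => 2 * Real.exp (-c * Real.sqrt (Real.log t)) * (1 - c / (2 * Real.sqrt (Real.log t)))) (Set.Icc T x) := by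
      apply ContinuousOn.mul
      · exact (continuousOn_const.mul ((contOn_ec c).mono (fun t htt => le_trans (by linarith) htt.1)))
      · apply ContinuousOn.sub continuousOn_const
        apply ContinuousOn.div continuousOn_const
        · apply ContinuousOn.mul continuousOn_const
          apply Real.continuous_sqrt.comp_continuousOn
          exact Real.continuousOn_log.mono (fun t htt => by
            simp only [Set.mem_compl_iff, Set.mem_singleton_iff]
            intro h; have := htt.1; rw [h] at this; linarith)
        · intro t htt
          have h1 := hlogT t htt.1
          have h2 : 0 < Real.sqrt (Real.log t) := lt_of_lt_of_le hc h1
          positivity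
    have hintD : IntervalIntegrable (fun t => 2 * Real.exp (-c * Real.sqrt (Real.log t)) * (1 - c / (2 * Real.sqrt (Real.log t)))) MeasureTheory.volume T x := by
      exact (hcontD.mono (by rw [Set.uIcc_of_le hTx.le])).intervalIntegrable
    have hmono : ∫ t in T..x, Real.exp (-c * Real.sqrt (Real.log t)) ≤
        ∫ t in T..x, 2 * Real.exp (-c * Real.sqrt (Real.log t)) * (1 - c / (2 * Real.sqrt (Real.log t))) := by
      apply intervalIntegral.integral_mono_on hTx.le (hec_int T x (by linarith) hTx.le) hintD
      intro t htt
      have h1 : c ≤ Real.sqrt (Real.log t) := hlogT t htt.1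
      have h2 : 0 < Real.sqrt (Real.log t) := lt_of_lt_of_le hc h1
      have h3 : c / (2 * Real.sqrt (Real.log t)) ≤ 1/2 := by
        rw [div_le_iff₀ (by positivity)]; nlinarith
      have h4 : (0:ℝ) < Real.exp (-c * Real.sqrt (Real.log t)) := Real.exp_pos _
      nlinarith
    have hftc : ∫ t in T..x, 2 * Real.exp (-c * Real.sqrt (Real.log t)) * (1 - c / (2 * Real.sqrt (Real.log t)))
        = 2 * x * Real.exp (-c * Real.sqrt (Real.log x)) - 2 * T * Real.exp (-c * Real.sqrt (Real.log T)) := by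
      exact intervalIntegral.integral_eq_sub_of_hasDerivAt hderiv hintD
    have hTpos : 0 ≤ 2 * T * Real.exp (-c * Real.sqrt (Real.log T)) := by positivity
    have h2T := hsimple 2 T (by norm_num) hT2
    rw [hsplit]
    linarith [hmono.trans_eq hftc]

lemma contOn_invlog : ContinuousOn (fun s : ℝ => 1 / Real.log s) (Set.Ioi 1) := by
  apply ContinuousOn.div continuousOn_const
  · exact Real.continuousOn_log.mono (fun t ht => by
      simp only [Set.mem_compl_iff, Set.mem_singleton_iff]
      intro h; simp only [Set.mem_Ioi] at ht; linarith)
  · intro t ht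
    exact ne_of_gt (Real.log_pos ht)

lemma hasDerivAt_L (t : ℝ) (ht : 2 ≤ t) :
    HasDerivAt (fun u => ∫ s in (2:ℝ)..u, 1 / Real.log s) (1 / Real.log t) t := by
  have ht1 : (1:ℝ) < t := by linarith
  have hsub : Set.uIcc (2:ℝ) t ⊆ Set.Ioi 1 := by
    rw [Set.uIcc_of_le ht]
    exact fun s hs => lt_of_lt_of_le one_lt_two hs.1
  apply intervalIntegral.integral_hasDerivAt_right
  · exact (contOn_invlog.mono hsub).intervalIntegrable
  · exact contOn_invlog.stronglyMeasurableAtFilter isOpen_Ioi t ht1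
  · exact contOn_invlog.continuousAt (isOpen_Ioi.mem_nhds ht1)

lemma ftcL (x : ℝ) (hx : 2 ≤ x) :
    ∫ t in (2:ℝ)..x, (∫ s in (2:ℝ)..t, 1 / Real.log s) * t⁻¹
      = (∫ s in (2:ℝ)..x, 1 / Real.log s) * Real.log x - x + 2 := by
  set L : ℝ → ℝ := fun u => ∫ s in (2:ℝ)..u, 1 / Real.log s with hL
  have hderiv : ∀ t ∈ Set.uIcc (2:ℝ) x,
      HasDerivAt (fun u => L u * Real.log u - u) (L t * t⁻¹) t := by
    intro t htm
    rw [Set.uIcc_of_le hx] at htm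
    have ht2 : 2 ≤ t := htm.1
    have ht0 : t ≠ 0 := by linarith
    have hlog : Real.log t ≠ 0 := ne_of_gt (Real.log_pos (by linarith))
    have h1 := (hasDerivAt_L t ht2).mul (Real.hasDerivAt_log ht0)
    have h2 := h1.sub (hasDerivAt_id t)
    refine h2.congr_deriv ?_
    field_simp
    simp only [hL]; ring
  have hcontL : ContinuousOn L (Set.Icc 2 x) :=
    fun t htm => ((hasDerivAt_L t htm.1).continuousAt).continuousWithinAt
  have hint : IntervalIntegrable (fun t => L t * t⁻¹) MeasureTheory.volume 2 x := by
    apply ContinuousOn.intervalIntegrable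
    rw [Set.uIcc_of_le hx]
    apply hcontL.mul (continuousOn_inv₀.mono (fun t htm => ?_))
    simp only [Set.mem_compl_iff, Set.mem_singleton_iff]
    intro h; have := htm.1; rw [h] at this; linarith
  rw [intervalIntegral.integral_eq_sub_of_hasDerivAt hderiv hint]
  have : L 2 = 0 := intervalIntegral.integral_same
  rw [this]
  simp only [hL]
  ring


lemma count_eq_zero (f : Set ℕ) (t : ℝ) (ht : t < 2) : primeCountIn f t = 0 := by
  rw [primeCountIn]
  convert Set.ncard_empty ℕ
  ext p
  simp only [Set.mem_setOf_eq, Set.mem_empty_iff_false, iff_false, not_and]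
  intro hp hpf hpt
  have h2 : (2:ℝ) ≤ (p:ℝ) := by exact_mod_cast hp.two_le
  linarith

lemma count_mono (f : Set ℕ) {s t : ℝ} (h : s ≤ t) : primeCountIn f s ≤ primeCountIn f t := by
  rw [count_eq_card, count_eq_card]
  apply Finset.card_le_card
  exact Finset.filter_subset_filter _ (Finset.Icc_subset_Icc le_rfl (Nat.floor_le_floor h))

theorem stmt8 (f : Set ℕ) (d : ℝ) (hd : 0 < d) (c : ℝ) (hc : 0 < c)
    (C₀ : ℝ) (hC₀ : 0 < C₀)
    (hpi : ∀ x : ℝ, 2 ≤ x →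
      |(primeCountIn f x : ℝ) - d * ∫ t in (2 : ℝ)..x, 1 / Real.log t| ≤
        C₀ * x * Real.exp (-c * Real.sqrt (Real.log x))) :
    ∃ C : ℝ, 0 < C ∧ ∀ x : ℝ, 2 ≤ x →
      |primeSumIn f Real.log x - d * x| ≤
        C * x * Real.log x * Real.exp (-c * Real.sqrt (Real.log x)) := by
  set T : ℝ := max 2 (Real.exp (c^2)) with hTdef
  set η : ℝ := Real.log 2 * Real.exp (-(c^2)/4) with hηdef
  have hl2 : (0:ℝ) < Real.log 2 := Real.log_pos (by norm_num)
  have hηpos : 0 < η := by rw [hηdef]; positivity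
  have hTpos : (0:ℝ) < T := lt_of_lt_of_le (by norm_num) (le_max_left _ _)
  refine ⟨C₀ + 2*C₀/Real.log 2 + (2*d + C₀*T)/η, by positivity, fun x hx => ?_⟩
  have hx1 : (1:ℝ) ≤ x := by linarith
  have hx0 : (0:ℝ) < x := by linarith
  set L : ℝ → ℝ := fun u => ∫ s in (2:ℝ)..u, 1 / Real.log s with hLdef
  set ε : ℝ → ℝ := fun t => Real.exp (-c * Real.sqrt (Real.log t)) with hεdef
  set e : ℝ → ℝ := fun t => (primeCountIn f t : ℝ) - d * L t with hedef
  have hεpos : ∀ t : ℝ, 0 < ε t := fun t => Real.exp_pos _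
  have he : ∀ t : ℝ, 2 ≤ t → |e t| ≤ C₀ * t * ε t := by
    intro t ht
    have := hpi t ht
    simpa [hedef, hLdef, hεdef] using this
  -- Abel summation
  have hf_diff : ∀ t ∈ Set.Icc (1:ℝ) x, DifferentiableAt ℝ Real.log t := by
    intro t ht
    exact Real.differentiableAt_log (by intro h0; rw [h0] at ht; exact absurd ht.1 (by norm_num))
  have hf_int : MeasureTheory.IntegrableOn (deriv Real.log) (Set.Icc 1 x) := by
    rw [Real.deriv_log']
    apply ContinuousOn.integrableOn_compact isCompact_Icc
    apply continuousOn_inv₀.mono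
    intro t ht
    simp only [Set.mem_compl_iff, Set.mem_singleton_iff]
    intro h0; rw [h0] at ht; exact absurd ht.1 (by norm_num)
  have habel := sum_mul_eq_sub_sub_integral_mul (f := Real.log) (ind f) zero_le_one hx1
    hf_diff hf_int
  rw [Nat.floor_one, Real.log_one, zero_mul, sub_zero] at habel
  rw [sum_ind_eq_count f x] at habel
  -- replace the integral
  have hS : ∀ t : ℝ, deriv Real.log t * ∑ k ∈ Finset.Icc 0 ⌊t⌋₊, ind f k
      = t⁻¹ * (primeCountIn f t : ℝ) := by
    intro t; rw [Real.deriv_log, sum_ind_eq_count f t]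
  have hint_eq : ∫ t in Set.Ioc (1:ℝ) x, deriv Real.log t * ∑ k ∈ Finset.Icc 0 ⌊t⌋₊, ind f k
      = ∫ t in Set.Ioc (2:ℝ) x, t⁻¹ * (primeCountIn f t : ℝ) := by
    simp_rw [hS]
    have hae : ∀ᵐ t : ℝ ∂MeasureTheory.volume, t ≠ 2 := by
      rw [MeasureTheory.ae_iff]
      have : {t : ℝ | ¬ t ≠ 2} = {2} := by ext t; simp
      rw [this]
      exact Real.volume_singleton
    rw [MeasureTheory.setIntegral_congr_ae (measurableSet_Ioc)
      (g := (Set.Ioc (2:ℝ) x).indicator (fun t => t⁻¹ * (primeCountIn f t : ℝ))) ?_]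
    · rw [MeasureTheory.setIntegral_indicator measurableSet_Ioc,
        Set.inter_eq_self_of_subset_right (Set.Ioc_subset_Ioc_left (by norm_num))]
    · filter_upwards [hae] with t ht2 htm
      by_cases hmem : t ∈ Set.Ioc (2:ℝ) x
      · rw [Set.indicator_of_mem hmem]
      · rw [Set.indicator_of_notMem hmem]
        have hle2 : t < 2 := by
          simp only [Set.mem_Ioc, not_and_or, not_lt, not_le] at hmem
          rcases hmem with h | h
          · exact lt_of_le_of_ne h ht2
          · exact absurd htm.2 (not_le.mpr h)
        rw [count_eq_zero f t hle2]
        simp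
  rw [hint_eq] at habel
  -- integrability of the count integrand
  have hg_int : MeasureTheory.IntegrableOn (fun t : ℝ => t⁻¹ * (primeCountIn f t : ℝ))
      (Set.Ioc 2 x) := by
    apply MeasureTheory.Measure.integrableOn_of_bounded (M := (primeCountIn f x : ℝ))
    · exact measure_Ioc_lt_top.ne
    · exact (measurable_inv.mul (count_measurable f)).aestronglyMeasurable
    · rw [MeasureTheory.ae_restrict_iff' measurableSet_Ioc]
      refine MeasureTheory.ae_of_all _ (fun t ht => ?_)
      have h2t : 2 < t := ht.1
      have hcnt : (primeCountIn f t : ℝ) ≤ (primeCountIn f x : ℝ) := by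
        exact_mod_cast count_mono f ht.2
      have h0c : (0:ℝ) ≤ (primeCountIn f t : ℝ) := Nat.cast_nonneg _
      have hti : t⁻¹ ≤ 1 := by
        rw [inv_le_one_iff₀]; right; linarith
      rw [Real.norm_eq_abs, abs_mul, abs_inv, abs_of_pos (by linarith : (0:ℝ) < t),
        abs_of_nonneg h0c]
      calc t⁻¹ * (primeCountIn f t : ℝ) ≤ 1 * (primeCountIn f x : ℝ) :=
            mul_le_mul hti hcnt h0c zero_le_one
        _ = _ := one_mul _
  have hgInt : IntervalIntegrable (fun t : ℝ => t⁻¹ * (primeCountIn f t : ℝ))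
      MeasureTheory.volume 2 x :=
    (intervalIntegrable_iff_integrableOn_Ioc_of_le hx).mpr hg_int
  have hIocInt : ∫ t in Set.Ioc (2:ℝ) x, t⁻¹ * (primeCountIn f t : ℝ)
      = ∫ t in (2:ℝ)..x, t⁻¹ * (primeCountIn f t : ℝ) :=
    (intervalIntegral.integral_of_le hx).symm
  rw [hIocInt] at habel
  -- integrability of L * inv
  have hL_cont : ContinuousOn L (Set.Icc 2 x) :=
    fun t htm => ((hasDerivAt_L t htm.1).continuousAt).continuousWithinAt
  have hLint : IntervalIntegrable (fun t => L t * t⁻¹) MeasureTheory.volume 2 x := by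
    apply ContinuousOn.intervalIntegrable
    rw [Set.uIcc_of_le hx]
    apply hL_cont.mul (continuousOn_inv₀.mono (fun t htm => ?_))
    simp only [Set.mem_compl_iff, Set.mem_singleton_iff]
    intro h0; have := htm.1; rw [h0] at this; linarith
  -- error integrand
  have hsplit_fun : (fun t : ℝ => t⁻¹ * e t)
      = fun t : ℝ => t⁻¹ * (primeCountIn f t : ℝ) - d * (L t * t⁻¹) := by
    funext t; simp only [hedef]; ring
  have hEint : IntervalIntegrable (fun t : ℝ => t⁻¹ * e t) MeasureTheory.volume 2 x := by
    rw [hsplit_fun]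
    exact hgInt.sub (hLint.const_mul d)
  have hint_split : ∫ t in (2:ℝ)..x, t⁻¹ * (primeCountIn f t : ℝ)
      = d * (L x * Real.log x - x + 2) + ∫ t in (2:ℝ)..x, t⁻¹ * e t := by
    have h1 : ∫ t in (2:ℝ)..x, t⁻¹ * e t
        = (∫ t in (2:ℝ)..x, t⁻¹ * (primeCountIn f t : ℝ)) - d * ∫ t in (2:ℝ)..x, L t * t⁻¹ := by
      rw [hsplit_fun, intervalIntegral.integral_sub hgInt (hLint.const_mul d),
        intervalIntegral.integral_const_mul]
    have h2 : ∫ t in (2:ℝ)..x, L t * t⁻¹ = L x * Real.log x - x + 2 := ftcL x hx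
    rw [h1, h2]; ring
  rw [hint_split] at habel
  -- bound on the error integral
  have hEbound : |∫ t in (2:ℝ)..x, t⁻¹ * e t| ≤ C₀ * (T + 2 * x * ε x) := by
    calc |∫ t in (2:ℝ)..x, t⁻¹ * e t| ≤ ∫ t in (2:ℝ)..x, |t⁻¹ * e t| :=
          intervalIntegral.abs_integral_le_integral_abs hx
      _ ≤ ∫ t in (2:ℝ)..x, C₀ * ε t := by
          apply intervalIntegral.integral_mono_on hx hEint.abs
          · exact (((contOn_ec c).mono (by
              rw [Set.uIcc_of_le hx]
              exact fun t htt => le_trans (by norm_num) htt.1)).intervalIntegrable).const_mul C₀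
          · intro t htm
            have ht2 : 2 ≤ t := htm.1
            have ht0 : (0:ℝ) < t := by linarith
            have := he t ht2
            rw [abs_mul, abs_inv, abs_of_pos ht0]
            calc t⁻¹ * |e t| ≤ t⁻¹ * (C₀ * t * ε t) := by
                  apply mul_le_mul_of_nonneg_left this (by positivity)
              _ = C₀ * ε t := by field_simp
      _ = C₀ * ∫ t in (2:ℝ)..x, ε t := intervalIntegral.integral_const_mul _ _
      _ ≤ C₀ * (T + 2 * x * ε x) := by
          apply mul_le_mul_of_nonneg_left _ hC₀.le
          exact exp_int_bound c hc x hx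
  -- main identity
  have hkey : primeSumIn f Real.log x - d * x = Real.log x * e x - 2 * d
      - ∫ t in (2:ℝ)..x, t⁻¹ * e t := by
    rw [primeSumIn_eq f x, habel]
    simp only [hedef]
    ring
  -- final estimate
  have hlogx : Real.log 2 ≤ Real.log x := Real.log_le_log (by norm_num) hx
  have hlog0 : 0 ≤ Real.log x := by linarith
  have hex := he x hx
  have habs : |primeSumIn f Real.log x - d * x| ≤
      C₀ * x * Real.log x * ε x + 2 * d + C₀ * T + 2 * C₀ * (x * ε x) := by
    rw [hkey]
    have h1 : |Real.log x * e x| ≤ Real.log x * (C₀ * x * ε x) := by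
      rw [abs_mul, abs_of_nonneg hlog0]
      exact mul_le_mul_of_nonneg_left hex hlog0
    have h2 := hEbound
    calc |Real.log x * e x - 2 * d - ∫ t in (2:ℝ)..x, t⁻¹ * e t|
        ≤ |Real.log x * e x| + |2 * d| + |∫ t in (2:ℝ)..x, t⁻¹ * e t| := by
          apply (abs_sub _ _).trans
          gcongr
          exact abs_sub _ _
      _ ≤ Real.log x * (C₀ * x * ε x) + 2 * d + C₀ * (T + 2 * x * ε x) := by
          have : |2 * d| = 2 * d := abs_of_pos (by linarith)
          rw [this]
          gcongr
      _ = C₀ * x * Real.log x * ε x + 2 * d + C₀ * T + 2 * C₀ * (x * ε x) := by ring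
  have hB : η ≤ x * Real.log x * ε x := lower_bd c x hx
  have h3 : 2 * C₀ * (x * ε x) ≤ (2 * C₀ / Real.log 2) * (x * Real.log x * ε x) := by
    rw [div_mul_eq_mul_div, le_div_iff₀ hl2]
    have hxe : 0 ≤ x * ε x := by positivity
    nlinarith [mul_le_mul_of_nonneg_left hlogx (by positivity : (0:ℝ) ≤ 2 * C₀ * (x * ε x))]
  have h4 : 2 * d + C₀ * T ≤ ((2 * d + C₀ * T) / η) * (x * Real.log x * ε x) := by
    rw [div_mul_eq_mul_div, le_div_iff₀ hηpos]
    have hpos : 0 ≤ 2 * d + C₀ * T := by positivity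
    nlinarith [mul_le_mul_of_nonneg_left hB hpos]
  calc |primeSumIn f Real.log x - d * x|
      ≤ C₀ * x * Real.log x * ε x + 2 * d + C₀ * T + 2 * C₀ * (x * ε x) := habs
    _ ≤ C₀ * (x * Real.log x * ε x) + ((2 * d + C₀ * T) / η) * (x * Real.log x * ε x)
        + (2 * C₀ / Real.log 2) * (x * Real.log x * ε x) := by linarith
    _ = (C₀ + 2*C₀/Real.log 2 + (2*d + C₀*T)/η) * x * Real.log x * ε x := by ring
end

section
/- Let a, b : ℕ → ℝ be sequences of nonnegative reals, and for a real t ≥ 1 set A(t) = ∑_{m ≤ ⌊t⌋} a_m and B(t) = ∑_{m ≤ ⌊t⌋} b_m. Let g : ℝ → ℝ be monotone increasing and continuously differentiable with g'(t) ≥ 0 on [1, ∞), and with g(n) > 0 and B(n) > 0 for all sufficiently large n. Suppose: (i) A(n)/B(n) → 1 as n → ∞; (ii) the limit L = lim_{n→∞} (∫_1^n B(t)·g'(t) dt)/(B(n)·g(n)) exists, is finite and L ≠ 1; (iii) ∫_1^n B(t)·g'(t) dt → ∞ as n → ∞. Then (∑_{k=1}^n a_k·g(k))/(∑_{k=1}^n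 b_k·g(k)) → 1 as n → ∞. -/
open Filter

/-- The partial-sum step function `A(t) = ∑_{m ≤ ⌊t⌋} a m`. -/
noncomputable def partialSum (a : ℕ → ℝ) (t : ℝ) : ℝ :=
  ∑ m ∈ Finset.range (⌊t⌋₊ + 1), a m

open MeasureTheory intervalIntegral

lemma partialSum_eq_Icc (c : ℕ → ℝ) (t : ℝ) :
    partialSum c t = ∑ k ∈ Finset.Icc 0 ⌊t⌋₊, c k := by
  rw [partialSum, Finset.range_eq_Ico, Finset.Ico_add_one_right_eq_Icc]

lemma partialSum_mono {c : ℕ → ℝ} (hc : ∀ m, 0 ≤ c m) : Monotone (partialSum c) :=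
  fun s t h => Finset.sum_le_sum_of_subset_of_nonneg
    (Finset.range_subset_range.mpr (Nat.succ_le_succ (Nat.floor_le_floor h)))
    fun i _ _ => hc i

lemma partialSum_nonneg {c : ℕ → ℝ} (hc : ∀ m, 0 ≤ c m) (t : ℝ) : 0 ≤ partialSum c t :=
  Finset.sum_nonneg fun i _ => hc i

lemma partialSum_floor (c : ℕ → ℝ) (t : ℝ) :
    partialSum c t = partialSum c (⌊t⌋₊ : ℝ) := by
  rw [partialSum, partialSum, Nat.floor_natCast]

lemma partialSum_intInt {c : ℕ → ℝ} (hc : ∀ m, 0 ≤ c m) {g' : ℝ → ℝ}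
    (hcont : ContinuousOn g' (Set.Ici (1 : ℝ))) {x y : ℝ} (hx : 1 ≤ x) (hy : 1 ≤ y) :
    IntervalIntegrable (fun t => partialSum c t * g' t) volume x y :=
  (((partialSum_mono hc).monotoneOn _).intervalIntegrable).mul_continuousOn
    (hcont.mono (by
      intro t ht
      rcases Set.mem_uIcc.mp ht with h | h
      · exact le_trans hx h.1
      · exact le_trans hy h.1))

lemma abel_formula (c : ℕ → ℝ) {g g' : ℝ → ℝ}
    (hderiv : ∀ t ∈ Set.Ici (1 : ℝ), HasDerivAt g (g' t) t)
    (hcont : ContinuousOn g' (Set.Ici (1 : ℝ)))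
    {n : ℕ} (hn : 1 ≤ n) :
    ∑ k ∈ Finset.Icc 1 n, c k * g k =
      g n * partialSum c n - (∫ t in (1 : ℝ)..(n : ℝ), partialSum c t * g' t)
        - g 1 * c 0 := by
  have hn' : (1 : ℝ) ≤ (n : ℝ) := by exact_mod_cast hn
  have hderiv_eq : ∀ t ∈ Set.Icc (1 : ℝ) n, deriv g t = g' t := fun t ht =>
    (hderiv t ht.1).deriv
  have hf_diff : ∀ t ∈ Set.Icc (1 : ℝ) n, DifferentiableAt ℝ g t := fun t ht =>
    (hderiv t ht.1).differentiableAt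
  have hf_int : IntegrableOn (deriv g) (Set.Icc (1 : ℝ) n) := by
    refine ((hcont.mono (Set.Icc_subset_Ici_self)).integrableOn_Icc).congr_fun
      (fun t ht => (hderiv_eq t ht).symm) measurableSet_Icc
  have key := sum_mul_eq_sub_sub_integral_mul c (zero_le_one) hn' hf_diff hf_int
  rw [Nat.floor_one, Nat.floor_natCast] at key
  have hIcc : Finset.Icc 1 n = Finset.cons 1 (Finset.Ioc 1 n) (by simp) :=
    Finset.Icc_eq_cons_Ioc hn
  rw [hIcc, Finset.sum_cons]
  have hsum : ∑ k ∈ Finset.Ioc 1 n, c k * g k = ∑ k ∈ Finset.Ioc 1 n, g k * c k :=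
    Finset.sum_congr rfl fun k _ => mul_comm _ _
  rw [hsum, key]
  have hint_eq : ∫ t in Set.Ioc (1 : ℝ) (n : ℝ), deriv g t * (∑ k ∈ Finset.Icc 0 ⌊t⌋₊, c k)
      = ∫ t in (1 : ℝ)..(n : ℝ), partialSum c t * g' t := by
    rw [intervalIntegral.integral_of_le hn']
    refine setIntegral_congr_fun measurableSet_Ioc fun t ht => ?_
    rw [← partialSum_eq_Icc, hderiv_eq t ⟨le_of_lt ht.1, ht.2⟩, mul_comm]
  rw [hint_eq, partialSum_eq_Icc]
  have h2 : ∑ k ∈ Finset.Icc 0 1, c k = c 0 + c 1 := by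
    rw [show (1:ℕ) = 0 + 1 from rfl, Finset.sum_Icc_succ_top (Nat.zero_le _)]
    simp
  rw [Nat.floor_natCast, h2, Nat.cast_one]
  ring

lemma integral_ratio (a b : ℕ → ℝ) (ha : ∀ m, 0 ≤ a m) (hb : ∀ m, 0 ≤ b m)
    {g' : ℝ → ℝ} (hcont : ContinuousOn g' (Set.Ici (1 : ℝ)))
    (hg' : ∀ t ∈ Set.Ici (1 : ℝ), 0 ≤ g' t)
    (hBpos : ∀ᶠ n : ℕ in atTop, 0 < partialSum b n)
    (hratio : Tendsto (fun n : ℕ => partialSum a n / partialSum b n) atTop (nhds 1))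
    (hint : Tendsto (fun n : ℕ => ∫ t in (1 : ℝ)..(n : ℝ), partialSum b t * g' t)
      atTop atTop) :
    Tendsto (fun n : ℕ => (∫ t in (1 : ℝ)..(n : ℝ), partialSum a t * g' t) /
      (∫ t in (1 : ℝ)..(n : ℝ), partialSum b t * g' t)) atTop (nhds 1) := by
  rw [Metric.tendsto_atTop]
  intro ε hε
  obtain ⟨N₁, hN₁⟩ := (Metric.tendsto_atTop.mp hratio) (ε/2) (by positivity)
  obtain ⟨N₂, hN₂⟩ := eventually_atTop.mp hBpos
  set N₀ : ℕ := max (max N₁ N₂) 1 with hN₀def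
  have hN₀1 : 1 ≤ N₀ := le_max_right _ _
  have hN₀1' : (1:ℝ) ≤ (N₀:ℝ) := by exact_mod_cast hN₀1
  have key : ∀ m : ℕ, N₀ ≤ m → |partialSum a m - partialSum b m| ≤ ε/2 * partialSum b m := by
    intro m hm
    have hB := hN₂ m (le_trans (le_trans (le_max_right _ _) (le_max_left _ _)) hm)
    have hd := hN₁ m (le_trans (le_trans (le_max_left _ _) (le_max_left _ _)) hm)
    rw [Real.dist_eq] at hd
    have e : (partialSum a (m:ℝ) / partialSum b (m:ℝ) - 1) * partialSum b (m:ℝ)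
        = partialSum a (m:ℝ) - partialSum b (m:ℝ) := by
      field_simp
    calc |partialSum a (m:ℝ) - partialSum b (m:ℝ)|
        = |partialSum a (m:ℝ) / partialSum b (m:ℝ) - 1| * |partialSum b (m:ℝ)| := by
          rw [← abs_mul, e]
      _ ≤ ε/2 * |partialSum b (m:ℝ)| := by
          apply mul_le_mul_of_nonneg_right hd.le (abs_nonneg _)
      _ = ε/2 * partialSum b (m:ℝ) := by rw [abs_of_pos hB]
  have keyt : ∀ t : ℝ, (N₀:ℝ) ≤ t →
      |partialSum a t - partialSum b t| ≤ ε/2 * partialSum b t := by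
    intro t ht
    rw [partialSum_floor a, partialSum_floor b]
    exact key ⌊t⌋₊ (Nat.le_floor ht)
  set C : ℝ := |(∫ t in (1 : ℝ)..(N₀:ℝ), partialSum a t * g' t) -
    (∫ t in (1 : ℝ)..(N₀:ℝ), partialSum b t * g' t)| with hCdef
  have hC0 : 0 ≤ C := abs_nonneg _
  obtain ⟨N₃, hN₃⟩ := eventually_atTop.mp ((tendsto_atTop.mp hint) (2*C/ε + 1))
  refine ⟨max N₀ N₃, fun n hn => ?_⟩
  have hnN₀ : N₀ ≤ n := le_trans (le_max_left _ _) hn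
  have hnN₀' : (N₀:ℝ) ≤ (n:ℝ) := by exact_mod_cast hnN₀
  have hn1 : (1:ℝ) ≤ (n:ℝ) := le_trans hN₀1' hnN₀'
  set Ia : ℝ := ∫ t in (1 : ℝ)..(n : ℝ), partialSum a t * g' t with hIa
  set Ib : ℝ := ∫ t in (1 : ℝ)..(n : ℝ), partialSum b t * g' t with hIb
  have hIbn : 2*C/ε + 1 ≤ Ib := hN₃ n (le_trans (le_max_right _ _) hn)
  have hIbpos : 0 < Ib := lt_of_lt_of_le (by positivity) hIbn
  -- integrability
  have iA1 := partialSum_intInt ha hcont (le_refl (1:ℝ)) hN₀1'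
  have iB1 := partialSum_intInt hb hcont (le_refl (1:ℝ)) hN₀1'
  have iA2 := partialSum_intInt ha hcont hN₀1' (le_trans hN₀1' hnN₀')
  have iB2 := partialSum_intInt hb hcont hN₀1' (le_trans hN₀1' hnN₀')
  have hsplitA : (∫ t in (1:ℝ)..(N₀:ℝ), partialSum a t * g' t) +
      (∫ t in (N₀:ℝ)..(n:ℝ), partialSum a t * g' t) = Ia :=
    intervalIntegral.integral_add_adjacent_intervals iA1 iA2
  have hsplitB : (∫ t in (1:ℝ)..(N₀:ℝ), partialSum b t * g' t) +
      (∫ t in (N₀:ℝ)..(n:ℝ), partialSum b t * g' t) = Ib :=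
    intervalIntegral.integral_add_adjacent_intervals iB1 iB2
  -- tail bound
  have htail : |(∫ t in (N₀:ℝ)..(n:ℝ), partialSum a t * g' t) -
      (∫ t in (N₀:ℝ)..(n:ℝ), partialSum b t * g' t)| ≤
      ε/2 * ∫ t in (N₀:ℝ)..(n:ℝ), partialSum b t * g' t := by
    rw [← intervalIntegral.integral_sub iA2 iB2,
      ← intervalIntegral.integral_const_mul]
    calc |∫ t in (N₀:ℝ)..(n:ℝ), (partialSum a t * g' t - partialSum b t * g' t)|
        ≤ ∫ t in (N₀:ℝ)..(n:ℝ), |partialSum a t * g' t - partialSum b t * g' t| :=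
          intervalIntegral.abs_integral_le_integral_abs hnN₀'
      _ ≤ ∫ t in (N₀:ℝ)..(n:ℝ), ε/2 * (partialSum b t * g' t) := by
          apply intervalIntegral.integral_mono_on hnN₀' (iA2.sub iB2).abs
            (iB2.const_mul _)
          intro t ht
          have ht1 : (1:ℝ) ≤ t := le_trans hN₀1' ht.1
          have hg'0 : 0 ≤ g' t := hg' t ht1
          rw [← sub_mul, abs_mul, abs_of_nonneg hg'0]
          calc |partialSum a t - partialSum b t| * g' t
              ≤ (ε/2 * partialSum b t) * g' t :=
                mul_le_mul_of_nonneg_right (keyt t ht.1) hg'0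
            _ = ε/2 * (partialSum b t * g' t) := by ring
  have htailB_nonneg : 0 ≤ ∫ t in (N₀:ℝ)..(n:ℝ), partialSum b t * g' t := by
    apply intervalIntegral.integral_nonneg hnN₀'
    intro t ht
    exact mul_nonneg (partialSum_nonneg hb t) (hg' t (le_trans hN₀1' ht.1))
  have hheadB_nonneg : 0 ≤ ∫ t in (1:ℝ)..(N₀:ℝ), partialSum b t * g' t := by
    apply intervalIntegral.integral_nonneg hN₀1'
    intro t ht
    exact mul_nonneg (partialSum_nonneg hb t) (hg' t ht.1)
  have hbound : |Ia - Ib| ≤ C + ε/2 * Ib := by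
    have h1 : Ia - Ib = ((∫ t in (1:ℝ)..(N₀:ℝ), partialSum a t * g' t) -
        (∫ t in (1:ℝ)..(N₀:ℝ), partialSum b t * g' t)) +
        ((∫ t in (N₀:ℝ)..(n:ℝ), partialSum a t * g' t) -
        (∫ t in (N₀:ℝ)..(n:ℝ), partialSum b t * g' t)) := by
      rw [← hsplitA, ← hsplitB]; ring
    calc |Ia - Ib| ≤ C + |(∫ t in (N₀:ℝ)..(n:ℝ), partialSum a t * g' t) -
        (∫ t in (N₀:ℝ)..(n:ℝ), partialSum b t * g' t)| := by
          rw [h1]; exact abs_add_le _ _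
      _ ≤ C + ε/2 * ∫ t in (N₀:ℝ)..(n:ℝ), partialSum b t * g' t := by linarith
      _ ≤ C + ε/2 * Ib := by
          have : (∫ t in (N₀:ℝ)..(n:ℝ), partialSum b t * g' t) ≤ Ib := by
            rw [← hsplitB]; linarith
          nlinarith
  rw [Real.dist_eq]
  have e2 : Ia / Ib - 1 = (Ia - Ib) / Ib := by field_simp
  rw [e2, abs_div, abs_of_pos hIbpos, div_lt_iff₀ hIbpos]
  have hC : C < ε/2 * Ib := by
    have : ε/2 * (2*C/ε + 1) = C + ε/2 := by field_simp
    nlinarith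
  nlinarith [abs_nonneg (Ia - Ib)]

theorem stmt15 (a b : ℕ → ℝ) (ha : ∀ m, 0 ≤ a m) (hb : ∀ m, 0 ≤ b m)
    (g g' : ℝ → ℝ) (hmono : Monotone g)
    (hderiv : ∀ t ∈ Set.Ici (1 : ℝ), HasDerivAt g (g' t) t)
    (hcont : ContinuousOn g' (Set.Ici (1 : ℝ)))
    (hg' : ∀ t ∈ Set.Ici (1 : ℝ), 0 ≤ g' t)
    (hgpos : ∀ᶠ n : ℕ in atTop, 0 < g n)
    (hBpos : ∀ᶠ n : ℕ in atTop, 0 < partialSum b n)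
    (hratio : Tendsto (fun n : ℕ => partialSum a n / partialSum b n)
      atTop (nhds 1))
    (L : ℝ) (hL : L ≠ 1)
    (hLlim : Tendsto (fun n : ℕ =>
        (∫ t in (1 : ℝ)..(n : ℝ), partialSum b t * g' t) /
          (partialSum b n * g n)) atTop (nhds L))
    (hint : Tendsto (fun n : ℕ => ∫ t in (1 : ℝ)..(n : ℝ), partialSum b t * g' t)
      atTop atTop) :
    Tendsto (fun n : ℕ =>
        (∑ k ∈ Finset.Icc 1 n, a k * g k) / ∑ k ∈ Finset.Icc 1 n, b k * g k)
      atTop (nhds 1) := by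
  have hIaIb := integral_ratio a b ha hb hcont hg' hBpos hratio hint
  set Ia : ℕ → ℝ := fun n => ∫ t in (1:ℝ)..(n:ℝ), partialSum a t * g' t with hIadef
  set Ib : ℕ → ℝ := fun n => ∫ t in (1:ℝ)..(n:ℝ), partialSum b t * g' t with hIbdef
  set BG : ℕ → ℝ := fun n => partialSum b n * g n with hBGdef
  set num : ℕ → ℝ := fun n => g n * partialSum a n - Ia n - g 1 * a 0 with hnumdef
  set den : ℕ → ℝ := fun n => g n * partialSum b n - Ib n - g 1 * b 0 with hdendef
  have hIbpos : ∀ᶠ n : ℕ in atTop, 0 < Ib n := hint.eventually_gt_atTop 0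
  have hBGpos : ∀ᶠ n : ℕ in atTop, 0 < BG n := by
    filter_upwards [hBpos, hgpos] with n h1 h2 using mul_pos h1 h2
  have hL0 : 0 ≤ L := by
    refine ge_of_tendsto hLlim ?_
    filter_upwards [hIbpos, hBGpos] with n h1 h2
    exact (div_pos h1 h2).le
  have hL1 : (0:ℝ) < L + 1 := by linarith
  have hBGtop : Tendsto BG atTop atTop := by
    refine tendsto_atTop_mono' atTop ?_ (hint.atTop_div_const hL1)
    filter_upwards [hLlim.eventually_lt_const (lt_add_one L), hIbpos, hBGpos]
      with n h1 h2 h3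
    rw [div_le_iff₀ hL1]
    rw [div_lt_iff₀ h3] at h1
    linarith
  have hzeroA : Tendsto (fun n : ℕ => (g 1 * a 0) / BG n) atTop (nhds 0) :=
    tendsto_const_nhds.div_atTop hBGtop
  have hzeroB : Tendsto (fun n : ℕ => (g 1 * b 0) / BG n) atTop (nhds 0) :=
    tendsto_const_nhds.div_atTop hBGtop
  have hnum : Tendsto (fun n => num n / BG n) atTop (nhds (1 - L)) := by
    have h := (hratio.sub (hIaIb.mul hLlim)).sub hzeroA
    rw [show (1:ℝ) - 1 * L - 0 = 1 - L by ring] at h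
    refine h.congr' ?_
    filter_upwards [hBpos, hgpos, hIbpos] with n hB hg hIbn
    have hBne : partialSum b (n:ℝ) ≠ 0 := hB.ne'
    have hgne : g n ≠ 0 := hg.ne'
    have hIbne : Ib n ≠ 0 := hIbn.ne'
    show partialSum a (n:ℝ) / partialSum b (n:ℝ) -
      Ia n / Ib n * (Ib n / (partialSum b (n:ℝ) * g n)) - g 1 * a 0 / BG n = num n / BG n
    rw [hnumdef, hBGdef]
    field_simp
  have hden : Tendsto (fun n => den n / BG n) atTop (nhds (1 - L)) := by
    have h := ((tendsto_const_nhds (x := (1:ℝ))).sub hLlim).sub hzeroB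
    rw [show (1:ℝ) - L - 0 = 1 - L by ring] at h
    refine h.congr' ?_
    filter_upwards [hBpos, hgpos] with n hB hg
    have hBne : partialSum b (n:ℝ) ≠ 0 := hB.ne'
    have hgne : g n ≠ 0 := hg.ne'
    show (1:ℝ) - Ib n / (partialSum b (n:ℝ) * g n) - g 1 * b 0 / BG n = den n / BG n
    rw [hdendef, hBGdef]
    field_simp
  have hLne : (1:ℝ) - L ≠ 0 := sub_ne_zero.mpr (Ne.symm hL)
  have hfinal : Tendsto (fun n => num n / den n) atTop (nhds 1) := by
    have h := hnum.div hden hLne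
    rw [div_self hLne] at h
    refine h.congr' ?_
    filter_upwards [hBGpos] with n hBGn
    have hz : BG n ≠ 0 := hBGn.ne'
    rcases eq_or_ne (den n) 0 with hd | hd
    · simp [hd, div_zero]
    · rw [Pi.div_apply]; field_simp
  refine hfinal.congr' ?_
  filter_upwards [eventually_ge_atTop 1] with n hn
  rw [abel_formula a hderiv hcont hn, abel_formula b hderiv hcont hn]
end
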